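/- If μ is a Beltrami coefficient on the upper half-plane with ∫_U |μ(z)|^p / y² dxdy < ∞ for some p ≥ 1, then the measure λ_μ with dλ_μ = |μ(z)|² y^{-1} dxdy is a vanishing Carleson measure: λ_μ(I × (0,|I|])/|I| → 0 uniformly as |I| → 0. -/

import Mathlib

open MeasureTheory Set

/-- The upper half-plane as a subset of ℂ. -/
noncomputable def UHP : Set ℂ := {z : ℂ | 0 < z.im}

open scoped ENNReal NNReal

noncomputable def Tm : ℝ × ℝ ≃ᵐ ℂ :=
  (MeasurableEquiv.prodComm (α := ℝ) (β := ℝ)).trans Complex.measurableEquivRealProd.symm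

lemma Tm_apply (p : ℝ × ℝ) : Tm p = Complex.mk p.2 p.1 := by simp [Tm]; exact ⟨rfl, rfl⟩

lemma Tm_apply'' (p : ℝ × ℝ) : Tm p = (p.2 : ℂ) + (p.1 : ℂ) * Complex.I := by
  rw [Tm_apply]; exact Complex.mk_eq_add_mul_I _ _

lemma Tm_apply' (y x : ℝ) : Tm (y, x) = (x : ℂ) + (y : ℂ) * Complex.I := by
  rw [Tm_apply]; exact Complex.mk_eq_add_mul_I _ _

lemma Tm_mp : MeasurePreserving Tm volume volume := by
  have h1 : MeasurePreserving (MeasurableEquiv.prodComm (α := ℝ) (β := ℝ)) (volume : Measure (ℝ × ℝ)) volume := by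
    have := Measure.measurePreserving_swap (μ := (volume : Measure ℝ)) (ν := (volume : Measure ℝ))
    rw [← Measure.volume_eq_prod] at this
    exact this
  exact (Complex.volume_preserving_equiv_real_prod.symm _).comp h1

def boxC (a b : ℝ) : Set ℂ := {z : ℂ | z.re ∈ Set.Icc a b ∧ z.im ∈ Set.Ioc 0 (b - a)}

lemma boxC_meas (a b : ℝ) : MeasurableSet (boxC a b) :=
  (Complex.measurable_re measurableSet_Icc).inter (Complex.measurable_im measurableSet_Ioc)

lemma Tm_preimage (a b : ℝ) : Tm ⁻¹' boxC a b = Ioc 0 (b - a) ×ˢ Icc a b := by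
  ext ⟨y, x⟩
  simp [boxC, Tm_apply, Set.mem_prod, and_comm]

lemma volume_boxC (a b : ℝ) : volume (boxC a b) = ENNReal.ofReal (b - a) * ENNReal.ofReal (b - a) := by
  rw [← Tm_mp.measure_preimage (boxC_meas a b).nullMeasurableSet, Tm_preimage,
    Measure.volume_eq_prod, Measure.prod_prod, Real.volume_Ioc, Real.volume_Icc, sub_zero]

lemma hF_int {g : ℂ → ℝ} {a b : ℝ} (hIb : IntegrableOn g (boxC a b) volume) :
    Integrable (fun p : ℝ × ℝ => g (Tm p))
      ((volume.restrict (Ioc 0 (b - a))).prod (volume.restrict (Icc a b))) := by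
  rw [Measure.prod_restrict, ← Measure.volume_eq_prod, ← Tm_preimage]
  exact (Tm_mp.integrableOn_comp_preimage Tm.measurableEmbedding).mpr hIb

lemma fubini_box {g : ℂ → ℝ} {a b : ℝ} (hIb : IntegrableOn g (boxC a b) volume) :
    ∫ y in Ioc (0:ℝ) (b - a), ∫ x in Icc a b, g ((x : ℂ) + (y : ℂ) * Complex.I)
      = ∫ z in boxC a b, g z := by
  have h := MeasureTheory.integral_integral (f := fun y x => g (Tm (y, x)))
    (μ := volume.restrict (Ioc 0 (b - a))) (ν := volume.restrict (Icc a b)) (hF_int hIb)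
  simp_rw [Tm_apply'] at h
  rw [h]
  have h2 : ∫ z : ℝ × ℝ, g ((z.2 : ℂ) + (z.1 : ℂ) * Complex.I) ∂((volume.restrict (Ioc 0 (b-a))).prod (volume.restrict (Icc a b)))
      = ∫ p in Tm ⁻¹' boxC a b, g (Tm p) := by
    simp_rw [← Tm_apply'']
    rw [Measure.prod_restrict, ← Measure.volume_eq_prod, ← Tm_preimage]
  rw [h2, Tm_mp.setIntegral_preimage_emb Tm.measurableEmbedding g (boxC a b)]

lemma abs_cont {g : ℂ → ℝ} (hgm : Measurable g) (hg0 : ∀ z, 0 ≤ g z)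
    (hgint : IntegrableOn g UHP volume) {ε : ℝ} (hε : 0 < ε) :
    ∃ δ > (0:ℝ), ∀ s : Set ℂ, MeasurableSet s → s ⊆ UHP → volume s < ENNReal.ofReal δ →
      ∫ z in s, g z ≤ ε := by
  have hfin : ∫⁻ z, ENNReal.ofReal (g z) ∂(volume.restrict UHP) ≠ ⊤ := by
    have h := hgint.2
    rw [HasFiniteIntegral] at h
    have : ∀ z, ENNReal.ofReal (g z) = (‖g z‖ₑ : ℝ≥0∞) := fun z =>
      (Real.enorm_eq_ofReal (hg0 z)).symm
    simp_rw [this]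
    exact h.ne
  obtain ⟨δ', hδ'pos, hδ'⟩ := exists_pos_setLIntegral_lt_of_measure_lt
    (μ := volume.restrict UHP) hfin (ε := ENNReal.ofReal ε) ((ENNReal.ofReal_pos.2 hε).ne')
  refine ⟨(min δ' 1).toReal, ?_, fun s hs hsub hvs => ?_⟩
  · apply ENNReal.toReal_pos
    · simp [hδ'pos.ne', (lt_min hδ'pos one_pos).ne']
    · exact ne_top_of_le_ne_top (by simp) (min_le_right _ _)
  · have hmin : ENNReal.ofReal (min δ' 1).toReal = min δ' 1 :=
      ENNReal.ofReal_toReal (ne_top_of_le_ne_top (by simp) (min_le_right _ _))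
    have h1 : (volume.restrict UHP) s < δ' := by
      rw [Measure.restrict_apply hs]
      calc volume (s ∩ UHP) ≤ volume s := measure_mono (inter_subset_left)
        _ < ENNReal.ofReal (min δ' 1).toReal := hvs
        _ ≤ δ' := by rw [hmin]; exact min_le_left _ _
    have h2 := hδ' s h1
    rw [Measure.restrict_restrict hs, inter_eq_self_of_subset_left hsub] at h2
    rw [MeasureTheory.integral_eq_lintegral_of_nonneg_ae
      (Filter.Eventually.of_forall fun z => hg0 z) hgm.aestronglyMeasurable]
    exact ENNReal.toReal_le_of_le_ofReal hε.le h2.le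

lemma alg1 {L Tq X Y Ig th : ℝ} (hL : L ≠ 0) :
    (1/L) * ((th * (Tq * L)) * Ig + (X * L) * Y) = th * Tq * Ig + X * Y := by
  field_simp

lemma young_pt {q u y c : ℝ} (hq : 2 < q) (hu : 0 ≤ u) (hy : 0 < y) (hc : 0 < c) :
    u ^ (2:ℕ) / y ≤ (2/q) * (c * (u ^ q / y ^ (2:ℕ)))
      + (1 - 2/q) * (c ^ (-(2/(q-2))) * y ^ ((4-q)/(q-2))) := by
  have hq0 : (0:ℝ) < q := by linarith
  have hθ0 : (0:ℝ) < 2/q := by positivity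
  have hθ1 : 2/q < 1 := by rw [div_lt_one hq0]; linarith
  have hB : (0:ℝ) < c ^ (-(2/(q-2))) * y ^ ((4-q)/(q-2)) :=
    mul_pos (Real.rpow_pos_of_pos hc _) (Real.rpow_pos_of_pos hy _)
  rcases eq_or_lt_of_le hu with h0 | hu0
  · rw [← h0, Real.zero_rpow hq0.ne']
    simp only [ne_eq, OfNat.ofNat_ne_zero, not_false_eq_true, zero_pow, zero_div, mul_zero,
      zero_div, mul_zero, zero_add]
    exact mul_nonneg (by linarith) hB.le
  · have hA : (0:ℝ) < c * (u ^ q / y ^ (2:ℕ)) :=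
      mul_pos hc (div_pos (Real.rpow_pos_of_pos hu0 _) (by positivity))
    have key : u ^ (2:ℕ) / y = (c * (u ^ q / y ^ (2:ℕ))) ^ (2/q)
        * (c ^ (-(2/(q-2))) * y ^ ((4-q)/(q-2))) ^ (1 - 2/q) := by
      have hL : (0:ℝ) < u ^ (2:ℕ) / y := by positivity
      have hR : (0:ℝ) < (c * (u ^ q / y ^ (2:ℕ))) ^ (2/q)
          * (c ^ (-(2/(q-2))) * y ^ ((4-q)/(q-2))) ^ (1 - 2/q) :=
        mul_pos (Real.rpow_pos_of_pos hA _) (Real.rpow_pos_of_pos hB _)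
      apply Real.log_injOn_pos (mem_Ioi.2 hL) (mem_Ioi.2 hR)
      rw [Real.log_div (by positivity) hy.ne', Real.log_pow,
        Real.log_mul (Real.rpow_pos_of_pos hA _).ne' (Real.rpow_pos_of_pos hB _).ne',
        Real.log_rpow hA, Real.log_rpow hB,
        Real.log_mul hc.ne' (by positivity),
        Real.log_mul (Real.rpow_pos_of_pos hc _).ne' (Real.rpow_pos_of_pos hy _).ne',
        Real.log_div (Real.rpow_pos_of_pos hu0 _).ne' (by positivity),
        Real.log_rpow hu0, Real.log_rpow hc, Real.log_rpow hy, Real.log_pow]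
      have hq2 : q - 2 ≠ 0 := by linarith
      field_simp
      ring
    rw [key]
    exact Real.geom_mean_le_arith_mean2_weighted hθ0.le (by linarith) hA.le hB.le (by ring)


set_option maxHeartbeats 1000000

/-- If `μ` is a Beltrami coefficient on the upper half-plane with
`∫_U |μ|^p / y² < ∞` for some `p ≥ 1`, then the measure `dλ_μ = |μ(z)|² y⁻¹ dxdy`
is a vanishing Carleson measure: `λ_μ(I × (0,|I|])/|I| → 0` uniformly as `|I| → 0`. -/
theorem stmt1 (p : ℝ) (hp : 1 ≤ p) (μ : ℂ → ℂ) (hmeas : Measurable μ)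
    (k : ℝ) (hk : k < 1) (hbd : ∀ z, ‖μ z‖ ≤ k)
    (hfin : IntegrableOn (fun z => ‖μ z‖ ^ p / z.im ^ 2) UHP volume) :
    ∀ ε > (0 : ℝ), ∃ δ > (0 : ℝ), ∀ a b : ℝ, a < b → b - a < δ →
      (1 / (b - a)) *
          (∫ y in Ioc (0 : ℝ) (b - a), ∫ x in Icc a b,
            ‖μ (x + y * Complex.I)‖ ^ 2 / y)
        ≤ ε := by
  -- setup
  set q : ℝ := max p 2 with hqdef
  have hq2 : (2:ℝ) ≤ q := le_max_right _ _
  have hqp : p ≤ q := le_max_left _ _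
  have hq0 : (0:ℝ) < q := by linarith
  have hμ1 : ∀ z, ‖μ z‖ < 1 := fun z => lt_of_le_of_lt (hbd z) hk
  set g : ℂ → ℝ := fun z => ‖μ z‖ ^ q / z.im ^ 2 with hgdef
  have hgm : Measurable g := by
    apply Measurable.div
    · exact ((Real.continuous_rpow_const hq0.le).measurable).comp
        (continuous_norm.measurable.comp hmeas)
    · exact Complex.measurable_im.pow measurable_const
  have hg0 : ∀ z, 0 ≤ g z := fun z =>
    div_nonneg (Real.rpow_nonneg (norm_nonneg _) _) (by positivity)
  have hgle : ∀ z, ‖μ z‖ ^ q ≤ ‖μ z‖ ^ p := by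
    intro z
    rcases eq_or_lt_of_le (norm_nonneg (μ z)) with h0 | h0
    · rw [← h0, Real.zero_rpow hq0.ne', Real.zero_rpow (by linarith : p ≠ 0)]
    · exact Real.rpow_le_rpow_of_exponent_ge h0 (hμ1 z).le hqp
  have hgint : IntegrableOn g UHP volume := by
    apply Integrable.mono hfin hgm.aestronglyMeasurable
    filter_upwards with z
    rw [Real.norm_eq_abs, Real.norm_eq_abs, abs_of_nonneg (hg0 z), abs_of_nonneg
      (div_nonneg (Real.rpow_nonneg (norm_nonneg _) _) (by positivity))]
    rw [hgdef]
    simp only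
    rw [div_eq_mul_inv, div_eq_mul_inv]
    exact mul_le_mul_of_nonneg_right (hgle z) (by positivity)
  intro ε hε
  -- constants
  have hθ0 : (0:ℝ) < 2/q := by positivity
  have hθ1 : 2/q ≤ 1 := by rw [div_le_one hq0]; linarith
  set T : ℝ := max 1 ((2/((2/(q-2))*ε)) ^ ((2/(q-2))⁻¹ : ℝ)) with hTdef
  have hT1 : (1:ℝ) ≤ T := le_max_left _ _
  have hT0 : (0:ℝ) < T := lt_of_lt_of_le one_pos hT1
  set ε' : ℝ := ε / (2 * ((2/q) * T)) with hε'def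
  have hε'0 : 0 < ε' := by positivity
  obtain ⟨δ₀, hδ₀, habs⟩ := abs_cont hgm hg0 hgint hε'0
  refine ⟨min δ₀ 1, lt_min hδ₀ one_pos, fun a b hab hLδ => ?_⟩
  have hL0 : (0:ℝ) < b - a := sub_pos.2 hab
  have hL1 : b - a < 1 := lt_of_lt_of_le hLδ (min_le_right _ _)
  have hLδ₀ : b - a < δ₀ := lt_of_lt_of_le hLδ (min_le_left _ _)
  -- the box
  have hsub : boxC a b ⊆ UHP := fun z hz => hz.2.1
  have hIb : IntegrableOn g (boxC a b) volume := hgint.mono_set hsub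
  have hvol : volume (boxC a b) < ENNReal.ofReal δ₀ := by
    rw [volume_boxC, ← ENNReal.ofReal_mul hL0.le]
    apply ENNReal.ofReal_lt_ofReal_iff hδ₀ |>.2
    nlinarith
  have hbox : ∫ z in boxC a b, g z ≤ ε' := habs _ (boxC_meas a b) hsub hvol
  have hboxnn : 0 ≤ ∫ z in boxC a b, g z :=
    setIntegral_nonneg (boxC_meas a b) fun z _ => hg0 z
  have hF := hF_int hIb
  have hfub := fubini_box hIb
  -- more constants
  set c : ℝ := T * (b - a) with hcdef
  have hc0 : (0:ℝ) < c := by positivity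
  have hs1 : (-1:ℝ) < (4-q)/(q-2) := by
    rcases eq_or_lt_of_le hq2 with h2 | h2
    · rw [← h2]; norm_num
    · rw [lt_div_iff₀ (by linarith)]; linarith
  -- pointwise bound
  have him : ∀ (x y : ℝ), ((x:ℂ) + (y:ℂ) * Complex.I).im = y := by intro x y; simp
  have key : ∀ y ∈ Ioc (0:ℝ) (b-a), ∀ x : ℝ,
      ‖μ ((x:ℂ) + (y:ℂ) * Complex.I)‖ ^ 2 / y ≤
      2/q * (c * g ((x:ℂ) + (y:ℂ) * Complex.I))
        + (1 - 2/q) * (c ^ (-(2/(q-2))) * y ^ ((4-q)/(q-2))) := by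
    intro y hy x
    have hy0 : 0 < y := hy.1
    have hyc : y ≤ c := le_trans hy.2 (le_mul_of_one_le_left hL0.le hT1)
    have hgz : g ((x:ℂ) + (y:ℂ) * Complex.I)
        = ‖μ ((x:ℂ) + (y:ℂ) * Complex.I)‖ ^ q / y ^ 2 := by
      rw [hgdef]; simp only; rw [him]
    rw [hgz]
    rcases eq_or_lt_of_le hq2 with h2 | h2
    · rw [← h2]
      have h22 : ‖μ ((x:ℂ) + (y:ℂ) * Complex.I)‖ ^ (2:ℝ)
          = ‖μ ((x:ℂ) + (y:ℂ) * Complex.I)‖ ^ (2:ℕ) := by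
        rw [← Real.rpow_natCast _ 2]; norm_num
      rw [h22]
      norm_num
      rw [mul_div_assoc', div_le_div_iff₀ hy0 (by positivity)]
      nlinarith [sq_nonneg (‖μ ((x:ℂ) + (y:ℂ) * Complex.I)‖),
        mul_le_mul_of_nonneg_left hyc (mul_nonneg
          (sq_nonneg (‖μ ((x:ℂ) + (y:ℂ) * Complex.I)‖)) hy0.le)]
    · exact young_pt h2 (norm_nonneg _) hy0 hc0

  -- integrability facts
  have hGint : Integrable (fun y : ℝ => ∫ x in Icc a b, g ((x:ℂ) + (y:ℂ) * Complex.I))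
      (volume.restrict (Ioc (0:ℝ) (b-a))) := by
    have h := hF.integral_prod_left
    simp_rw [Tm_apply'] at h
    exact h
  have hae : ∀ᵐ y : ℝ ∂(volume.restrict (Ioc (0:ℝ) (b-a))),
      Integrable (fun x : ℝ => g ((x:ℂ) + (y:ℂ) * Complex.I)) (volume.restrict (Icc a b)) := by
    have h := hF.prod_right_ae
    simp_rw [Tm_apply'] at h
    exact h
  have hys : IntegrableOn (fun y : ℝ => y ^ ((4-q)/(q-2))) (Ioc (0:ℝ) (b-a)) volume := by
    have h := intervalIntegral.intervalIntegrable_rpow' (a := (0:ℝ)) (b := b-a) hs1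
    rwa [intervalIntegrable_iff_integrableOn_Ioc_of_le hL0.le] at h
  have hrpow : ∫ y in Ioc (0:ℝ) (b-a), y ^ ((4-q)/(q-2))
      = (b-a) ^ ((4-q)/(q-2) + 1) / ((4-q)/(q-2) + 1) := by
    rw [← intervalIntegral.integral_of_le hL0.le, integral_rpow (Or.inl hs1),
      Real.zero_rpow (by linarith : (4-q)/(q-2) + 1 ≠ 0), sub_zero]
  -- step 1 : inner integral bound, a.e. in y
  have step1 : ∀ᵐ y : ℝ ∂(volume.restrict (Ioc (0:ℝ) (b-a))),
      (∫ x in Icc a b, ‖μ ((x:ℂ) + (y:ℂ) * Complex.I)‖ ^ 2 / y)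
      ≤ (2/q * c) * (∫ x in Icc a b, g ((x:ℂ) + (y:ℂ) * Complex.I))
        + ((1 - 2/q) * (c ^ (-(2/(q-2)))) * (b-a)) * y ^ ((4-q)/(q-2)) := by
    filter_upwards [hae, self_mem_ae_restrict measurableSet_Ioc] with y hyint hymem
    calc ∫ x in Icc a b, ‖μ ((x:ℂ) + (y:ℂ) * Complex.I)‖ ^ 2 / y
        ≤ ∫ x in Icc a b, (2/q * (c * g ((x:ℂ) + (y:ℂ) * Complex.I))
            + (1 - 2/q) * (c ^ (-(2/(q-2))) * y ^ ((4-q)/(q-2)))) := by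
          apply integral_mono_of_nonneg
          · filter_upwards with x
            exact div_nonneg (by positivity) hymem.1.le
          · exact ((hyint.const_mul c).const_mul (2/q)).add
              (integrableOn_const measure_Icc_lt_top.ne)
          · filter_upwards with x
            exact key y hymem x
      _ = (2/q * c) * (∫ x in Icc a b, g ((x:ℂ) + (y:ℂ) * Complex.I))
            + ((1 - 2/q) * (c ^ (-(2/(q-2)))) * (b-a)) * y ^ ((4-q)/(q-2)) := by
          rw [integral_add ((hyint.const_mul c).const_mul (2/q))
            (integrableOn_const measure_Icc_lt_top.ne),
            integral_const_mul, integral_const_mul, setIntegral_const,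
            Real.volume_real_Icc_of_le hab.le, smul_eq_mul]
          ring
  -- step 2 : outer integral bound
  have step2 : (∫ y in Ioc (0:ℝ) (b-a), ∫ x in Icc a b,
      ‖μ ((x:ℂ) + (y:ℂ) * Complex.I)‖ ^ 2 / y)
      ≤ (2/q * c) * (∫ z in boxC a b, g z)
        + ((1 - 2/q) * (c ^ (-(2/(q-2)))) * (b-a))
            * ((b-a) ^ ((4-q)/(q-2) + 1) / ((4-q)/(q-2) + 1)) := by
    have int2 : Integrable (fun y : ℝ =>
        (2/q * c) * (∫ x in Icc a b, g ((x:ℂ) + (y:ℂ) * Complex.I))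
        + ((1 - 2/q) * (c ^ (-(2/(q-2)))) * (b-a)) * y ^ ((4-q)/(q-2)))
        (volume.restrict (Ioc (0:ℝ) (b-a))) :=
      (hGint.const_mul _).add (hys.const_mul _)
    calc (∫ y in Ioc (0:ℝ) (b-a), ∫ x in Icc a b,
        ‖μ ((x:ℂ) + (y:ℂ) * Complex.I)‖ ^ 2 / y)
        ≤ ∫ y in Ioc (0:ℝ) (b-a),
            ((2/q * c) * (∫ x in Icc a b, g ((x:ℂ) + (y:ℂ) * Complex.I))
            + ((1 - 2/q) * (c ^ (-(2/(q-2)))) * (b-a)) * y ^ ((4-q)/(q-2))) := by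
          apply integral_mono_of_nonneg ?_ int2 step1
          filter_upwards [self_mem_ae_restrict measurableSet_Ioc] with y hy
          exact integral_nonneg fun x => div_nonneg (by positivity) hy.1.le
      _ = (2/q * c) * (∫ z in boxC a b, g z)
            + ((1 - 2/q) * (c ^ (-(2/(q-2)))) * (b-a))
              * ((b-a) ^ ((4-q)/(q-2) + 1) / ((4-q)/(q-2) + 1)) := by
          rw [integral_add (hGint.const_mul _) (hys.const_mul _),
            integral_const_mul, integral_const_mul, hfub, hrpow]
  -- final bounds
  have h1 : (2/q * T) * (∫ z in boxC a b, g z) ≤ ε/2 := by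
    calc (2/q * T) * (∫ z in boxC a b, g z) ≤ (2/q * T) * ε' :=
          mul_le_mul_of_nonneg_left hbox (by positivity)
      _ = ε/2 := by
          rw [hε'def]
          field_simp
  have h2' : (1 - 2/q) * (c ^ (-(2/(q-2))))
      * ((b-a) ^ ((4-q)/(q-2) + 1) / ((4-q)/(q-2) + 1)) ≤ ε/2 := by
    rcases eq_or_lt_of_le hq2 with h2 | h2
    · rw [← h2]
      norm_num
      linarith
    · have hq20 : (0:ℝ) < q - 2 := by linarith
      have hm0 : (0:ℝ) < 2/(q-2) := by positivity
      have hs2 : (4-q)/(q-2) + 1 = 2/(q-2) := by field_simp; norm_num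
      rw [hs2]
      have hcm : c ^ (-(2/(q-2))) = T ^ (-(2/(q-2))) * (b-a) ^ (-(2/(q-2))) := by
        rw [hcdef]
        exact Real.mul_rpow hT0.le hL0.le
      have hLL : (b-a) ^ (-(2/(q-2))) * (b-a) ^ (2/(q-2)) = 1 := by
        rw [← Real.rpow_add hL0]
        simp
      have hTm : 2/((2/(q-2))*ε) ≤ T ^ (2/(q-2)) := by
        have hrr : ((2/((2/(q-2))*ε)) ^ ((2/(q-2))⁻¹ : ℝ)) ^ (2/(q-2))
            = 2/((2/(q-2))*ε) := Real.rpow_inv_rpow (by positivity) hm0.ne'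
        calc 2/((2/(q-2))*ε) = _ := hrr.symm
          _ ≤ T ^ (2/(q-2)) := Real.rpow_le_rpow (by positivity) (le_max_right _ _) hm0.le
      have hTneg : T ^ (-(2/(q-2))) ≤ ((2/(q-2))*ε)/2 := by
        rw [Real.rpow_neg hT0.le]
        calc (T ^ (2/(q-2)))⁻¹ ≤ (2/((2/(q-2))*ε))⁻¹ :=
              inv_anti₀ (by positivity) hTm
          _ = ((2/(q-2))*ε)/2 := by rw [inv_div]
      have heq : (1 - 2/q) * (c ^ (-(2/(q-2)))) * ((b-a) ^ (2/(q-2)) / (2/(q-2)))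
          = (1 - 2/q) * (T ^ (-(2/(q-2)))) / (2/(q-2)) := by
        rw [hcm]
        calc (1 - 2/q) * (T ^ (-(2/(q-2))) * (b-a) ^ (-(2/(q-2))))
              * ((b-a) ^ (2/(q-2)) / (2/(q-2)))
            = (1 - 2/q) * T ^ (-(2/(q-2)))
              * ((b-a) ^ (-(2/(q-2))) * (b-a) ^ (2/(q-2))) / (2/(q-2)) := by ring
          _ = (1 - 2/q) * (T ^ (-(2/(q-2)))) / (2/(q-2)) := by rw [hLL, mul_one]
      rw [heq]
      have h1θ : (0:ℝ) ≤ 1 - 2/q := by linarith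
      have hTn0 : (0:ℝ) ≤ T ^ (-(2/(q-2))) := (Real.rpow_pos_of_pos hT0 _).le
      calc (1 - 2/q) * (T ^ (-(2/(q-2)))) / (2/(q-2))
          ≤ 1 * (T ^ (-(2/(q-2)))) / (2/(q-2)) := by
            apply (div_le_div_iff_of_pos_right hm0).mpr
            exact mul_le_mul_of_nonneg_right (by linarith) hTn0
        _ = (T ^ (-(2/(q-2)))) / (2/(q-2)) := by ring
        _ ≤ (((2/(q-2))*ε)/2) / (2/(q-2)) := (div_le_div_iff_of_pos_right hm0).mpr hTneg
        _ = ε/2 := by field_simp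
  -- conclusion
  calc (1 / (b - a)) * (∫ y in Ioc (0:ℝ) (b-a), ∫ x in Icc a b,
        ‖μ ((x:ℂ) + (y:ℂ) * Complex.I)‖ ^ 2 / y)
      ≤ (1 / (b - a)) * ((2/q * c) * (∫ z in boxC a b, g z)
          + ((1 - 2/q) * (c ^ (-(2/(q-2)))) * (b-a))
              * ((b-a) ^ ((4-q)/(q-2) + 1) / ((4-q)/(q-2) + 1))) :=
        mul_le_mul_of_nonneg_left step2 (one_div_pos.2 hL0).le
    _ = (2/q * T) * (∫ z in boxC a b, g z)
          + (1 - 2/q) * (c ^ (-(2/(q-2))))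
              * ((b-a) ^ ((4-q)/(q-2) + 1) / ((4-q)/(q-2) + 1)) := by
        rw [hcdef]
        exact alg1 hL0.ne'
    _ ≤ ε/2 + ε/2 := add_le_add h1 h2'
    _ = ε := by ring
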